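/- For any two-sender unicast index coding problem with side-information digraph D and message partition P, the optimal linear broadcast rate satisfies β_t^l(D,P) ≤ β_t^l(D_1) + β_t^l(D_2) + β_t^l(D_{1,2}), where D_1, D_2, D_{1,2} are the subdigraphs induced by the messages exclusively at sender 1, exclusively at sender 2, and at both senders respectively. -/

import Mathlib

/-- `Decodes D E` : every receiver `i` can recover its `t`-bit message `x i` from the
codeword `E x` and its side information (the messages of its out-neighbours in the
side-information digraph `D`). -/
def Decodes {V : Type} {t p : ℕ} (D : V → V → Prop)
    (E : (V → Fin t → ZMod 2) → (Fin p → ZMod 2)) : Prop :=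
  ∀ (i : V) (x y : V → Fin t → ZMod 2),
    E x = E y → (∀ j, D i j → x j = y j) → x i = y i

/-- The set of broadcast rates `p / t` achievable by linear single-sender index codes for
the side-information digraph `D` with `t`-bit messages. -/
def linRates (V : Type) (t : ℕ) (D : V → V → Prop) : Set ℝ :=
  { r | ∃ (p : ℕ) (E : (V → Fin t → ZMod 2) →ₗ[ZMod 2] (Fin p → ZMod 2)),
      Decodes D ⇑E ∧ r = (p : ℝ) / t }

/-- Optimal linear broadcast rate of the single-sender problem with digraph `D`. -/
noncomputable def beta1 (V : Type) (t : ℕ) (D : V → V → Prop) : ℝ :=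
  sInf (linRates V t D)

/-- `OnlyUses M E` : the encoder `E` depends only on the messages indexed by `M`. -/
def OnlyUses {V : Type} {t p : ℕ} (M : Set V)
    (E : (V → Fin t → ZMod 2) → (Fin p → ZMod 2)) : Prop :=
  ∀ x y : V → Fin t → ZMod 2, (∀ j ∈ M, x j = y j) → E x = E y

/-- Two-sender decodability: every receiver recovers its message from both transmitted
sub-codewords and its side information. -/
def Decodes2 {V : Type} {t p1 p2 : ℕ} (D : V → V → Prop)
    (E1 : (V → Fin t → ZMod 2) → (Fin p1 → ZMod 2))
    (E2 : (V → Fin t → ZMod 2) → (Fin p2 → ZMod 2)) : Prop :=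
  ∀ (i : V) (x y : V → Fin t → ZMod 2),
    E1 x = E1 y → E2 x = E2 y → (∀ j, D i j → x j = y j) → x i = y i

/-- Optimal linear broadcast rate `β_t^l(D, P)` of the two-sender problem: the infimum of
`(p₁ + p₂) / t` over pairs of linear encoders, where sender `s` may only use the messages
in `M s`, such that every receiver can decode. -/
noncomputable def beta2 (V : Type) (t : ℕ) (D : V → V → Prop) (M1 M2 : Set V) : ℝ :=
  sInf { r | ∃ (p1 p2 : ℕ)
      (E1 : (V → Fin t → ZMod 2) →ₗ[ZMod 2] (Fin p1 → ZMod 2))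
      (E2 : (V → Fin t → ZMod 2) →ₗ[ZMod 2] (Fin p2 → ZMod 2)),
      OnlyUses M1 ⇑E1 ∧ OnlyUses M2 ⇑E2 ∧ Decodes2 D ⇑E1 ⇑E2 ∧
      r = ((p1 : ℝ) + (p2 : ℝ)) / t }

section Aux

variable {V : Type} {t : ℕ}

open Classical in
/-- Extension by zero, as a linear map. -/
noncomputable def extZero (A : Set V) (t : ℕ) :
    (A → Fin t → ZMod 2) →ₗ[ZMod 2] (V → Fin t → ZMod 2) where
  toFun x v := if h : v ∈ A then x ⟨v, h⟩ else 0
  map_add' x y := by funext v; by_cases h : v ∈ A <;> simp [h]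
  map_smul' c x := by funext v; by_cases h : v ∈ A <;> simp [h]

/-- Restriction, as a linear map. -/
def restr (A : Set V) (t : ℕ) :
    (V → Fin t → ZMod 2) →ₗ[ZMod 2] (A → Fin t → ZMod 2) :=
  LinearMap.funLeft (ZMod 2) (Fin t → ZMod 2) Subtype.val

/-- Concatenation equivalence. -/
noncomputable def pairEquiv (a b : ℕ) :
    ((Fin a → ZMod 2) × (Fin b → ZMod 2)) ≃ₗ[ZMod 2] (Fin (a + b) → ZMod 2) :=
  ((LinearEquiv.funCongrLeft (ZMod 2) (ZMod 2) finSumFinEquiv).trans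
    (LinearEquiv.sumArrowLequivProdArrow _ _ (ZMod 2) (ZMod 2))).symm

/-- Every achievable rate is nonnegative, hence `beta1 ≥ 0`. -/
lemma beta1_nonneg (V : Type) (t : ℕ) (D : V → V → Prop) : 0 ≤ beta1 V t D := by
  refine Real.sInf_nonneg ?_
  rintro r ⟨p, E, -, rfl⟩
  positivity

lemma beta2_mem_nonneg {V : Type} {t : ℕ} {D : V → V → Prop} {M1 M2 : Set V} {r : ℝ}
    (hr : r ∈ { r | ∃ (p1 p2 : ℕ)
      (E1 : (V → Fin t → ZMod 2) →ₗ[ZMod 2] (Fin p1 → ZMod 2))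
      (E2 : (V → Fin t → ZMod 2) →ₗ[ZMod 2] (Fin p2 → ZMod 2)),
      OnlyUses M1 ⇑E1 ∧ OnlyUses M2 ⇑E2 ∧ Decodes2 D ⇑E1 ⇑E2 ∧
      r = ((p1 : ℝ) + (p2 : ℝ)) / t }) : 0 ≤ r := by
  obtain ⟨p1, p2, E1, E2, -, -, -, rfl⟩ := hr
  positivity

/-- If the two-sender problem has any code, then every induced subproblem has a code. -/
lemma sub_nonempty {V : Type} {t : ℕ} {D : V → V → Prop} {M1 M2 : Set V}
    (hB : ∃ (p1 p2 : ℕ)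
      (E1 : (V → Fin t → ZMod 2) →ₗ[ZMod 2] (Fin p1 → ZMod 2))
      (E2 : (V → Fin t → ZMod 2) →ₗ[ZMod 2] (Fin p2 → ZMod 2)),
      OnlyUses M1 ⇑E1 ∧ OnlyUses M2 ⇑E2 ∧ Decodes2 D ⇑E1 ⇑E2)
    (A : Set V) : (linRates ↥A t (fun a b => D a.1 b.1)).Nonempty := by
  obtain ⟨p1, p2, E1, E2, -, -, dec⟩ := hB
  classical
  refine ⟨((p1 + p2 : ℕ) : ℝ) / t, (p1 + p2), (pairEquiv p1 p2).toLinearMap ∘ₗ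
    (E1.prod E2) ∘ₗ extZero A t, ?_, rfl⟩
  intro i x y hE hside
  have hE' : (E1.prod E2) (extZero A t x) = (E1.prod E2) (extZero A t y) :=
    (pairEquiv p1 p2).injective hE
  have h1 : E1 (extZero A t x) = E1 (extZero A t y) := congrArg Prod.fst hE'
  have h2 : E2 (extZero A t x) = E2 (extZero A t y) := congrArg Prod.snd hE'
  have key : extZero A t x i.1 = extZero A t y i.1 := by
    refine dec i.1 _ _ h1 h2 ?_
    intro j hD
    by_cases hj : j ∈ A
    · simpa [extZero, hj] using hside ⟨j, hj⟩ hD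
    · simp [extZero, hj]
  simpa [extZero, i.2] using key

end Aux

/-- Trivial upper bound: concatenating optimal single-sender linear codes for the three
induced sub-problems `D₁` (messages only at sender 1), `D₂` (only at sender 2) and
`D_{1,2}` (at both) gives `β_t^l(D,P) ≤ β_t^l(D₁) + β_t^l(D₂) + β_t^l(D_{1,2})`. -/
theorem two_sender_le_sum_of_subproblems (V : Type) (t : ℕ) (ht : 1 ≤ t)
    (D : V → V → Prop) (M1 M2 : Set V) (hcov : M1 ∪ M2 = Set.univ) :
    beta2 V t D M1 M2 ≤
      beta1 ↥(M1 \ M2) t (fun a b => D a.1 b.1) +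
        beta1 ↥(M2 \ M1) t (fun a b => D a.1 b.1) +
        beta1 ↥(M1 ∩ M2) t (fun a b => D a.1 b.1) := by

  classical
  set B := { r : ℝ | ∃ (p1 p2 : ℕ)
      (E1 : (V → Fin t → ZMod 2) →ₗ[ZMod 2] (Fin p1 → ZMod 2))
      (E2 : (V → Fin t → ZMod 2) →ₗ[ZMod 2] (Fin p2 → ZMod 2)),
      OnlyUses M1 ⇑E1 ∧ OnlyUses M2 ⇑E2 ∧ Decodes2 D ⇑E1 ⇑E2 ∧
      r = ((p1 : ℝ) + (p2 : ℝ)) / t } with hBdef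
  have hb2 : beta2 V t D M1 M2 = sInf B := rfl
  by_cases hB : B.Nonempty
  · -- subproblem rate sets are nonempty
    obtain ⟨r0, p1, p2, E1, E2, hO1, hO2, hdec, -⟩ := hB
    have hcode : ∃ (p1 p2 : ℕ)
        (E1 : (V → Fin t → ZMod 2) →ₗ[ZMod 2] (Fin p1 → ZMod 2))
        (E2 : (V → Fin t → ZMod 2) →ₗ[ZMod 2] (Fin p2 → ZMod 2)),
        OnlyUses M1 ⇑E1 ∧ OnlyUses M2 ⇑E2 ∧ Decodes2 D ⇑E1 ⇑E2 :=
      ⟨p1, p2, E1, E2, hO1, hO2, hdec⟩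
    have hS1 := sub_nonempty hcode (M1 \ M2)
    have hS2 := sub_nonempty hcode (M2 \ M1)
    have hS12 := sub_nonempty hcode (M1 ∩ M2)
    have ht' : (t : ℝ) ≠ 0 := by
      have : 0 < t := ht
      positivity
    have hbdd : BddBelow B := ⟨0, fun r hr => beta2_mem_nonneg hr⟩
    -- key: for any achievable triple of rates, the sum is in B
    have hmem : ∀ r1 ∈ linRates ↥(M1 \ M2) t (fun a b => D a.1 b.1),
        ∀ r2 ∈ linRates ↥(M2 \ M1) t (fun a b => D a.1 b.1),
        ∀ r12 ∈ linRates ↥(M1 ∩ M2) t (fun a b => D a.1 b.1),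
        r1 + r2 + r12 ∈ B := by
      rintro r1 ⟨q1, F1, dec1, rfl⟩ r2 ⟨q2, F2, dec2, rfl⟩ r12 ⟨q12, F12, dec12, rfl⟩
      refine ⟨q1 + q12, q2, (pairEquiv q1 q12).toLinearMap ∘ₗ
        ((F1 ∘ₗ restr (M1 \ M2) t).prod (F12 ∘ₗ restr (M1 ∩ M2) t)),
        F2 ∘ₗ restr (M2 \ M1) t, ?_, ?_, ?_, ?_⟩
      · intro x y hxy
        simp only [LinearMap.coe_comp, Function.comp_apply]
        congr 1
        have hx1 : restr (M1 \ M2) t x = restr (M1 \ M2) t y := by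
          funext a; exact hxy a.1 a.2.1
        have hx12 : restr (M1 ∩ M2) t x = restr (M1 ∩ M2) t y := by
          funext a; exact hxy a.1 a.2.1
        simp [LinearMap.prod_apply, hx1, hx12]
      · intro x y hxy
        simp only [LinearMap.coe_comp, Function.comp_apply]
        congr 1
        funext a; exact hxy a.1 a.2.1
      · intro i x y h1 h2 hside
        simp only [LinearMap.coe_comp, Function.comp_apply] at h1 h2
        have h1' := (pairEquiv q1 q12).injective h1
        have hF1 : F1 (restr (M1 \ M2) t x) = F1 (restr (M1 \ M2) t y) :=
          congrArg Prod.fst h1'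
        have hF12 : F12 (restr (M1 ∩ M2) t x) = F12 (restr (M1 ∩ M2) t y) :=
          congrArg Prod.snd h1'
        by_cases hi1 : i ∈ M1
        · by_cases hi2 : i ∈ M2
          · exact dec12 ⟨i, hi1, hi2⟩ _ _ hF12 (fun j hD => hside j.1 hD)
          · exact dec1 ⟨i, hi1, hi2⟩ _ _ hF1 (fun j hD => hside j.1 hD)
        · by_cases hi2 : i ∈ M2
          · exact dec2 ⟨i, hi2, hi1⟩ _ _ h2 (fun j hD => hside j.1 hD)
          · exact absurd (hcov ▸ Set.mem_univ i : i ∈ M1 ∪ M2) (by simp [hi1, hi2])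
      · field_simp
        push_cast; ring
    rw [hb2]
    show sInf B ≤ beta1 ↥(M1 \ M2) t _ + beta1 ↥(M2 \ M1) t _ + beta1 ↥(M1 ∩ M2) t _
    have key1 : sInf B - beta1 ↥(M2 \ M1) t (fun a b => D a.1 b.1)
        - beta1 ↥(M1 ∩ M2) t (fun a b => D a.1 b.1) ≤
        beta1 ↥(M1 \ M2) t (fun a b => D a.1 b.1) := by
      refine le_csInf hS1 fun r1 hr1 => ?_
      have key2 : sInf B - r1 - beta1 ↥(M1 ∩ M2) t (fun a b => D a.1 b.1) ≤
          beta1 ↥(M2 \ M1) t (fun a b => D a.1 b.1) := by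
        refine le_csInf hS2 fun r2 hr2 => ?_
        have key3 : sInf B - r1 - r2 ≤
            beta1 ↥(M1 ∩ M2) t (fun a b => D a.1 b.1) := by
          refine le_csInf hS12 fun r12 hr12 => ?_
          have := csInf_le hbdd (hmem r1 hr1 r2 hr2 r12 hr12)
          linarith
        linarith
      linarith
    linarith
  · rw [hb2, Set.not_nonempty_iff_eq_empty.mp hB, Real.sInf_empty]
    have := beta1_nonneg ↥(M1 \ M2) t (fun a b => D a.1 b.1)
    have := beta1_nonneg ↥(M2 \ M1) t (fun a b => D a.1 b.1)
    have := beta1_nonneg ↥(M1 ∩ M2) t (fun a b => D a.1 b.1)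
    linarith
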